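/- Assume in addition that rank(L_{ii}) = ρ_i for every 1 ≤ i ≤ k and that ρ = p (so each L_{ii} is a square invertible matrix and L is invertible). Then the Moore–Penrose pseudoinverse of J = L Q satisfies J⁺ = Qᵀ L_D⁺ (I_p + L_L L_D⁺)^{-1}, where L_D⁺ is the Moore–Penrose pseudoinverse of L_D. -/

import Mathlib

open Matrix Module

-- uniqueness of the Moore-Penrose pseudoinverse
lemma mp_unique {n m : Type*} [Fintype n] [Fintype m]
    (A : Matrix n m ℝ) (B1 B2 : Matrix m n ℝ)
    (h11 : A * B1 * A = A) (h12 : B1 * A * B1 = B1)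
    (h13 : (A * B1)ᵀ = A * B1) (h14 : (B1 * A)ᵀ = B1 * A)
    (h21 : A * B2 * A = A) (h22 : B2 * A * B2 = B2)
    (h23 : (A * B2)ᵀ = A * B2) (h24 : (B2 * A)ᵀ = B2 * A) :
    B1 = B2 := by
  have hAB : A * B1 = A * B2 := by
    calc A * B1 = (A * B2 * A) * B1 := by rw [h21]
    _ = (A * B2) * (A * B1) := by rw [Matrix.mul_assoc]
    _ = (A * B2)ᵀ * (A * B1)ᵀ := by rw [h23, h13]
    _ = (B2ᵀ * Aᵀ) * (B1ᵀ * Aᵀ) := by rw [Matrix.transpose_mul, Matrix.transpose_mul]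
    _ = B2ᵀ * (A * B1 * A)ᵀ := by
        simp only [Matrix.transpose_mul, Matrix.mul_assoc]
    _ = B2ᵀ * Aᵀ := by rw [h11]
    _ = (A * B2)ᵀ := by rw [Matrix.transpose_mul]
    _ = A * B2 := h23
  have hBA : B1 * A = B2 * A := by
    calc B1 * A = B1 * (A * B2 * A) := by rw [h21]
    _ = (B1 * A) * (B2 * A) := by simp only [Matrix.mul_assoc]
    _ = (B1 * A)ᵀ * (B2 * A)ᵀ := by rw [h14, h24]
    _ = (A * B1 * A)ᵀ * B2ᵀ := by
        simp only [Matrix.transpose_mul, Matrix.mul_assoc]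
    _ = Aᵀ * B2ᵀ := by rw [h11]
    _ = (B2 * A)ᵀ := by rw [Matrix.transpose_mul]
    _ = B2 * A := h24
  calc B1 = B1 * A * B1 := h12.symm
  _ = B1 * (A * B2) := by rw [Matrix.mul_assoc, hAB]
  _ = (B2 * A) * B2 := by rw [← Matrix.mul_assoc, hBA]
  _ = B2 := h22

-- full-rank square-ish matrices have a two-sided inverse
lemma exists_two_sided_inv {a b : ℕ} (hab : a = b) (A : Matrix (Fin a) (Fin b) ℝ)
    (hr : A.rank = b) : ∃ B : Matrix (Fin b) (Fin a) ℝ, A * B = 1 ∧ B * A = 1 := by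
  have hker : LinearMap.ker A.mulVecLin = ⊥ := by
    have h1 := LinearMap.finrank_range_add_finrank_ker A.mulVecLin
    rw [Matrix.rank] at hr
    rw [hr] at h1
    have hb : finrank ℝ (Fin b → ℝ) = b := finrank_fin_fun ℝ
    rw [hb] at h1
    have h0 : finrank ℝ (LinearMap.ker A.mulVecLin) = 0 := by omega
    exact Submodule.finrank_eq_zero.mp h0
  have hfr : finrank ℝ (Fin b → ℝ) = finrank ℝ (Fin a → ℝ) := by
    rw [finrank_fin_fun, finrank_fin_fun, hab]
  have hrange : LinearMap.range A.mulVecLin = ⊤ :=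
    (LinearMap.ker_eq_bot_iff_range_eq_top_of_finrank_eq_finrank hfr).mp hker
  have hbij : Function.Bijective A.mulVecLin :=
    ⟨LinearMap.ker_eq_bot.mp hker, LinearMap.range_eq_top.mp hrange⟩
  let e : (Fin b → ℝ) ≃ₗ[ℝ] (Fin a → ℝ) := LinearEquiv.ofBijective A.mulVecLin hbij
  refine ⟨LinearMap.toMatrix' (e.symm : (Fin a → ℝ) →ₗ[ℝ] (Fin b → ℝ)), ?_, ?_⟩
  · have hA : Matrix.toLin' A = (e : (Fin b → ℝ) →ₗ[ℝ] (Fin a → ℝ)) := by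
      ext v i
      simp [Matrix.toLin'_apply, e, LinearEquiv.ofBijective_apply]
    apply Matrix.toLin'.injective
    rw [Matrix.toLin'_mul, Matrix.toLin'_toMatrix', hA, Matrix.toLin'_one]
    ext v
    simp
  · have hA : Matrix.toLin' A = (e : (Fin b → ℝ) →ₗ[ℝ] (Fin a → ℝ)) := by
      ext v i
      simp [Matrix.toLin'_apply, e, LinearEquiv.ofBijective_apply]
    apply Matrix.toLin'.injective
    rw [Matrix.toLin'_mul, Matrix.toLin'_toMatrix', hA, Matrix.toLin'_one]
    ext v
    simp

-- strictly block-lower-triangular matrices over sigma types are nilpotent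
lemma strict_lower_nilpotent {k : ℕ} {p : Fin k → ℕ}
    (M : Matrix ((i : Fin k) × Fin (p i)) ((i : Fin k) × Fin (p i)) ℝ)
    (h : ∀ x y, M x y ≠ 0 → (y.1 : ℕ) < x.1) : M ^ k = 0 := by
  have key : ∀ n : ℕ, ∀ x y, (M ^ n) x y ≠ 0 → (y.1 : ℕ) + n ≤ (x.1 : ℕ) := by
    intro n
    induction n with
    | zero =>
      intro x y hne
      rw [pow_zero] at hne
      by_cases hxy : x = y
      · subst hxy; omega
      · rw [Matrix.one_apply_ne hxy] at hne; exact absurd rfl hne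
    | succ n ih =>
      intro x y hne
      rw [pow_succ, Matrix.mul_apply] at hne
      obtain ⟨z, _, hz⟩ := Finset.exists_ne_zero_of_sum_ne_zero hne
      have h1 : (M ^ n) x z ≠ 0 := fun h0 => hz (by rw [h0, zero_mul])
      have h2 : M z y ≠ 0 := fun h0 => hz (by rw [h0, mul_zero])
      have := ih x z h1
      have := h z y h2
      omega
  ext x y
  by_contra hne
  have := key k x y (by simpa using hne)
  have := x.1.isLt
  omega

theorem stmt9 (k m : ℕ) (hk : 1 ≤ k) (p ρ : Fin k → ℕ)
    (Lb : (i j : Fin k) → Matrix (Fin (p i)) (Fin (ρ j)) ℝ)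
    (hLb : ∀ i j : Fin k, i < j → Lb i j = 0)
    (Q : (i : Fin k) → Matrix (Fin (ρ i)) (Fin m) ℝ)
    (hQorth : ∀ i, Q i * (Q i)ᵀ = 1)
    (hQperp : ∀ i j, i ≠ j → Q i * (Q j)ᵀ = 0)
    (J : (i : Fin k) → Matrix (Fin (p i)) (Fin m) ℝ)
    (hJ : ∀ i, J i = ∑ j ∈ Finset.Iic i, Lb i j * Q j)
    (Jst : Matrix ((i : Fin k) × Fin (p i)) (Fin m) ℝ)
    (hJst : ∀ x c, Jst x c = J x.1 x.2 c)
    (Qst : Matrix ((i : Fin k) × Fin (ρ i)) (Fin m) ℝ)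
    (hQst : ∀ x c, Qst x c = Q x.1 x.2 c)
    (L : Matrix ((i : Fin k) × Fin (p i)) ((i : Fin k) × Fin (ρ i)) ℝ)
    (hL : ∀ x y, L x y = Lb x.1 y.1 x.2 y.2)
    (LD LL : Matrix ((i : Fin k) × Fin (p i)) ((i : Fin k) × Fin (ρ i)) ℝ)
    (hLD : LD = Matrix.blockDiagonal' fun i => Lb i i)
    (hLL : LL = L - LD)
    (hrank : ∀ i, (Lb i i).rank = ρ i)
    (hρp : ∑ i : Fin k, ρ i = ∑ i : Fin k, p i)
    (LDp : Matrix ((i : Fin k) × Fin (ρ i)) ((i : Fin k) × Fin (p i)) ℝ)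
    (hLDp1 : LD * LDp * LD = LD) (hLDp2 : LDp * LD * LDp = LDp)
    (hLDp3 : (LD * LDp)ᵀ = LD * LDp) (hLDp4 : (LDp * LD)ᵀ = LDp * LD)
    (Jp : Matrix (Fin m) ((i : Fin k) × Fin (p i)) ℝ)
    (hJp1 : Jst * Jp * Jst = Jst) (hJp2 : Jp * Jst * Jp = Jp)
    (hJp3 : (Jst * Jp)ᵀ = Jst * Jp) (hJp4 : (Jp * Jst)ᵀ = Jp * Jst) :
    Jp = Qstᵀ * LDp *
      ((1 : Matrix ((i : Fin k) × Fin (p i)) ((i : Fin k) × Fin (p i)) ℝ) + LL * LDp)⁻¹ := by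
  classical
  -- each block is square
  have hle : ∀ i : Fin k, ρ i ≤ p i := by
    intro i
    have h := (Lb i i).rank_le_card_height
    rw [hrank i] at h
    simpa using h
  have hpρ : ∀ i : Fin k, ρ i = p i := by
    have h := (Finset.sum_eq_sum_iff_of_le (fun i (_ : i ∈ Finset.univ) => hle i)).mp hρp
    exact fun i => h i (Finset.mem_univ i)
  -- per-block two-sided inverses
  have hCex : ∀ i : Fin k, ∃ Ci : Matrix (Fin (ρ i)) (Fin (p i)) ℝ,
      Lb i i * Ci = 1 ∧ Ci * Lb i i = 1 :=
    fun i => exists_two_sided_inv (hpρ i).symm (Lb i i) (hrank i)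
  choose C hC1 hC2 using hCex
  have hLD1 : LD * Matrix.blockDiagonal' C = 1 := by
    rw [hLD, ← Matrix.blockDiagonal'_mul]
    have : (fun i => Lb i i * C i) = fun i : Fin k =>
        (1 : Matrix (Fin (p i)) (Fin (p i)) ℝ) := funext fun i => hC1 i
    rw [this]; exact Matrix.blockDiagonal'_one
  have hLD2 : Matrix.blockDiagonal' C * LD = 1 := by
    rw [hLD, ← Matrix.blockDiagonal'_mul]
    have : (fun i => C i * Lb i i) = fun i : Fin k =>
        (1 : Matrix (Fin (ρ i)) (Fin (ρ i)) ℝ) := funext fun i => hC2 i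
    rw [this]; exact Matrix.blockDiagonal'_one
  have hLDpC : LDp = Matrix.blockDiagonal' C := by
    calc LDp = (Matrix.blockDiagonal' C * LD) * LDp * (LD * Matrix.blockDiagonal' C) := by
          rw [hLD2, hLD1, Matrix.one_mul, Matrix.mul_one]
    _ = Matrix.blockDiagonal' C * (LD * LDp * LD) * Matrix.blockDiagonal' C := by
        simp only [Matrix.mul_assoc]
    _ = Matrix.blockDiagonal' C * LD * Matrix.blockDiagonal' C := by rw [hLDp1]
    _ = Matrix.blockDiagonal' C := by rw [hLD2, Matrix.one_mul]
  have hDL : LDp * LD = 1 := by rw [hLDpC]; exact hLD2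
  have hDR : LD * LDp = 1 := by rw [hLDpC]; exact hLD1
  -- Jst = L * Qst
  have hJLQ : Jst = L * Qst := by
    ext x c
    rw [hJst, hJ, Matrix.mul_apply]
    have h1 : ∑ y : (j : Fin k) × Fin (ρ j), L x y * Qst y c
        = ∑ j : Fin k, ∑ b : Fin (ρ j), Lb x.1 j x.2 b * Q j b c := by
      rw [← Finset.univ_sigma_univ, Finset.sum_sigma]
      exact Finset.sum_congr rfl fun j _ => Finset.sum_congr rfl fun b _ => by
        rw [hL, hQst]
    rw [h1]
    rw [Matrix.sum_apply]
    have h2 : ∀ j : Fin k, (Lb x.1 j * Q j) x.2 c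
        = ∑ b : Fin (ρ j), Lb x.1 j x.2 b * Q j b c := fun j => Matrix.mul_apply
    rw [Finset.sum_congr rfl fun j _ => h2 j]
    refine Finset.sum_subset (Finset.subset_univ _) ?_
    intro j _ hj
    have hxj : x.1 < j := by simpa using hj
    rw [hLb x.1 j hxj]
    simp
  -- Qst * Qstᵀ = 1
  have hQQ : Qst * Qstᵀ = 1 := by
    ext ⟨i, a⟩ ⟨j, b⟩
    rw [Matrix.mul_apply]
    simp only [Matrix.transpose_apply, hQst]
    by_cases hij : i = j
    · subst hij
      have h := congrFun (congrFun (hQorth i) a) b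
      rw [Matrix.mul_apply] at h
      simp only [Matrix.transpose_apply] at h
      rw [h]
      simp [Matrix.one_apply, Sigma.mk.inj_iff]
    · have h := congrFun (congrFun (hQperp i j hij) a) b
      rw [Matrix.mul_apply] at h
      simp only [Matrix.transpose_apply] at h
      rw [h, Matrix.one_apply_ne]
      · rfl
      · simp [Sigma.mk.inj_iff, hij]
  -- LL * LDp is strictly block lower triangular
  have hN : ∀ x y, (LL * LDp) x y ≠ 0 → (y.1 : ℕ) < (x.1 : ℕ) := by
    intro x y hne
    rw [Matrix.mul_apply] at hne
    obtain ⟨z, _, hz⟩ := Finset.exists_ne_zero_of_sum_ne_zero hne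
    have hLLz : LL x z ≠ 0 := fun h0 => hz (by rw [h0, zero_mul])
    have hDz : LDp z y ≠ 0 := fun h0 => hz (by rw [h0, mul_zero])
    have h1 : z.1 = y.1 := by
      by_contra hzy
      apply hDz
      rw [hLDpC]
      obtain ⟨z1, z2⟩ := z
      obtain ⟨y1, y2⟩ := y
      exact Matrix.blockDiagonal'_apply_ne C _ _ hzy
    have h2 : (z.1 : ℕ) < (x.1 : ℕ) := by
      by_contra hzx
      apply hLLz
      obtain ⟨x1, x2⟩ := x
      obtain ⟨z1, z2⟩ := z
      simp only at hzx
      rw [hLL, Matrix.sub_apply, hL, hLD]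
      rcases eq_or_lt_of_le (not_lt.mp hzx) with heq | hlt
      · have heq' : x1 = z1 := Fin.ext heq
        subst heq'
        rw [Matrix.blockDiagonal'_apply_eq]
        simp
      · have hxz : x1 < z1 := hlt
        rw [hLb x1 z1 hxz,
          Matrix.blockDiagonal'_apply_ne (fun i => Lb i i) x2 z2 (Fin.ne_of_lt hxz)]
        simp
    have h3 : (z.1 : ℕ) = (y.1 : ℕ) := by rw [h1]
    omega
  have hnil : IsNilpotent (LL * LDp) := ⟨k, strict_lower_nilpotent _ hN⟩
  have hU : IsUnit (1 + LL * LDp) := hnil.isUnit_one_add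
  have hdet : IsUnit (1 + LL * LDp).det := (Matrix.isUnit_iff_isUnit_det _).mp hU
  set S := (1 + LL * LDp)⁻¹ with hSdef
  have hS1 : (1 + LL * LDp) * S = 1 := Matrix.mul_nonsing_inv _ hdet
  have hS2 : S * (1 + LL * LDp) = 1 := Matrix.nonsing_inv_mul _ hdet
  have hLsplit : L = LD + LL := by rw [hLL]; abel
  have hLLDp : L * LDp = 1 + LL * LDp := by
    rw [hLsplit, Matrix.add_mul, hDR]
  have hLform : (1 + LL * LDp) * LD = L := by
    rw [Matrix.add_mul, Matrix.one_mul, Matrix.mul_assoc, hDL, Matrix.mul_one, ← hLsplit]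
  have hSL : S * L = LD := by rw [← hLform, ← Matrix.mul_assoc, hS2, Matrix.one_mul]
  set B := Qstᵀ * LDp * S with hBdef
  have hJB : Jst * B = 1 := by
    calc Jst * B = (L * Qst) * (Qstᵀ * (LDp * S)) := by
              rw [hJLQ, hBdef]; simp only [Matrix.mul_assoc]
    _ = L * ((Qst * Qstᵀ) * (LDp * S)) := by simp only [Matrix.mul_assoc]
    _ = L * (LDp * S) := by rw [hQQ, Matrix.one_mul]
    _ = (L * LDp) * S := by rw [Matrix.mul_assoc]
    _ = 1 := by rw [hLLDp, hS1]
  have hBJ : B * Jst = Qstᵀ * Qst := by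
    calc B * Jst = Qstᵀ * (LDp * (S * L) * Qst) := by
              rw [hJLQ, hBdef]; simp only [Matrix.mul_assoc]
    _ = Qstᵀ * (LDp * LD * Qst) := by rw [hSL]
    _ = Qstᵀ * Qst := by rw [hDL, Matrix.one_mul]
  have e1 : Jst * B * Jst = Jst := by rw [hJB, Matrix.one_mul]
  have e2 : B * Jst * B = B := by
    rw [hBJ]
    have h : Qstᵀ * Qst * B = Qstᵀ * ((Qst * Qstᵀ) * (LDp * S)) := by
      rw [hBdef]; simp only [Matrix.mul_assoc]
    rw [h, hQQ, Matrix.one_mul, ← Matrix.mul_assoc]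
  have e3 : (Jst * B)ᵀ = Jst * B := by rw [hJB, Matrix.transpose_one]
  have e4 : (B * Jst)ᵀ = B * Jst := by
    rw [hBJ, Matrix.transpose_mul, Matrix.transpose_transpose]
  exact mp_unique Jst Jp B hJp1 hJp2 hJp3 hJp4 e1 e2 e3 e4
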